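/- Let P, Q, P', Q' be lattices with P and Q nonempty, and let ψ: P×Q → P'×Q' be a map preserving the four pre-bilattice operations: ψ(x∨ₜy)=ψ(x)∨ₜψ(y), ψ(x∧ₜy)=ψ(x)∧ₜψ(y), ψ(x∨ₖy)=ψ(x)∨ₖψ(y), ψ(x∧ₖy)=ψ(x)∧ₖψ(y), where on each product the operations are those of P⊙Q and P'⊙Q' respectively. Then there exist lattice homomorphisms h₁: P → P' and h₂: Q → Q' such that ψ(a,b) = (h₁(a), h₂(b)) for all (a,b) ∈ P×Q. -/
import Mathlib


/-- Truth join of the pre-bilattice `P ⊙ Q`. -/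
def joinT {P Q : Type*} [Lattice P] [Lattice Q] (p q : P × Q) : P × Q :=
  (p.1 ⊔ q.1, p.2 ⊓ q.2)

/-- Truth meet of the pre-bilattice `P ⊙ Q`. -/
def meetT {P Q : Type*} [Lattice P] [Lattice Q] (p q : P × Q) : P × Q :=
  (p.1 ⊓ q.1, p.2 ⊔ q.2)

/-- Knowledge join of the pre-bilattice `P ⊙ Q`. -/
def joinK {P Q : Type*} [Lattice P] [Lattice Q] (p q : P × Q) : P × Q :=
  (p.1 ⊔ q.1, p.2 ⊔ q.2)

/-- Knowledge meet of the pre-bilattice `P ⊙ Q`. -/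
def meetK {P Q : Type*} [Lattice P] [Lattice Q] (p q : P × Q) : P × Q :=
  (p.1 ⊓ q.1, p.2 ⊓ q.2)

/-- Every map `ψ : P × Q → P' × Q'` preserving the four pre-bilattice operations of
`P ⊙ Q` and `P' ⊙ Q'` (with `P`, `Q` nonempty) decomposes as a product of lattice
homomorphisms: `ψ (a,b) = (h₁ a, h₂ b)`. -/
theorem stmt15 {P Q P' Q' : Type*} [Lattice P] [Lattice Q] [Lattice P'] [Lattice Q']
    [Nonempty P] [Nonempty Q]
    (ψ : P × Q → P' × Q')
    (hvt : ∀ x y : P × Q, ψ (joinT x y) = joinT (ψ x) (ψ y))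
    (hmt : ∀ x y : P × Q, ψ (meetT x y) = meetT (ψ x) (ψ y))
    (hvk : ∀ x y : P × Q, ψ (joinK x y) = joinK (ψ x) (ψ y))
    (hmk : ∀ x y : P × Q, ψ (meetK x y) = meetK (ψ x) (ψ y)) :
    ∃ (h₁ : P → P') (h₂ : Q → Q'),
      (∀ a b : P, h₁ (a ⊔ b) = h₁ a ⊔ h₁ b) ∧
      (∀ a b : P, h₁ (a ⊓ b) = h₁ a ⊓ h₁ b) ∧
      (∀ a b : Q, h₂ (a ⊔ b) = h₂ a ⊔ h₂ b) ∧
      (∀ a b : Q, h₂ (a ⊓ b) = h₂ a ⊓ h₂ b) ∧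
      ∀ (a : P) (b : Q), ψ (a, b) = (h₁ a, h₂ b) := by
  -- first component independent of second argument
  have ind1 : ∀ (a : P) (b b' : Q), (ψ (a, b)).1 = (ψ (a, b')).1 := by
    intro a b b'
    have h1 := congrArg Prod.fst (hvt (a, b) (a, b'))
    have h2 := congrArg Prod.fst (hmk (a, b) (a, b'))
    simp [joinT, meetK] at h1 h2
    have : (ψ (a, b)).1 ⊔ (ψ (a, b')).1 = (ψ (a, b)).1 ⊓ (ψ (a, b')).1 := by
      rw [← h1, ← h2]
    have hle : (ψ (a, b)).1 ⊔ (ψ (a, b')).1 ≤ (ψ (a, b)).1 ⊓ (ψ (a, b')).1 := this.le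
    exact le_antisymm (le_trans (le_sup_left.trans hle) inf_le_right)
      (le_trans (le_sup_right.trans hle) inf_le_left)
  have ind2 : ∀ (a a' : P) (b : Q), (ψ (a, b)).2 = (ψ (a', b)).2 := by
    intro a a' b
    have h1 := congrArg Prod.snd (hvk (a, b) (a', b))
    have h2 := congrArg Prod.snd (hvt (a, b) (a', b))
    simp [joinT, joinK] at h1 h2
    have : (ψ (a, b)).2 ⊔ (ψ (a', b)).2 = (ψ (a, b)).2 ⊓ (ψ (a', b)).2 := by
      rw [← h1, ← h2]
    have hle : (ψ (a, b)).2 ⊔ (ψ (a', b)).2 ≤ (ψ (a, b)).2 ⊓ (ψ (a', b)).2 := this.le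
    exact le_antisymm (le_trans (le_sup_left.trans hle) inf_le_right)
      (le_trans (le_sup_right.trans hle) inf_le_left)
  obtain ⟨p₀⟩ := ‹Nonempty P›
  obtain ⟨q₀⟩ := ‹Nonempty Q›
  refine ⟨fun a => (ψ (a, q₀)).1, fun b => (ψ (p₀, b)).2, ?_, ?_, ?_, ?_, ?_⟩
  · intro a b
    have := congrArg Prod.fst (hvk (a, q₀) (b, q₀))
    simpa [joinK] using this
  · intro a b
    have := congrArg Prod.fst (hmk (a, q₀) (b, q₀))
    simpa [meetK] using this
  · intro a b
    have := congrArg Prod.snd (hvk (p₀, a) (p₀, b))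
    simpa [joinK] using this
  · intro a b
    have := congrArg Prod.snd (hmk (p₀, a) (p₀, b))
    simpa [meetK] using this
  · intro a b
    exact Prod.ext (ind1 a b q₀) (ind2 a p₀ b)
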